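/- arXiv:0809.1504 — 3 statements merged into one kernel-verified Lean document; each statement's English description precedes it below -/
import Mathlib

section
/- With S a small category, F : S → X, G : S → Y functors, and A a category admitting the relevant Kan extensions: the functor S¹ : (X ⥤ A) → (Y ⥤ A) sending T to the left Kan extension of T ∘ F along G is left adjoint to the functor S₁ : (Y ⥤ A) → (X ⥤ A) sending V to the right Kan extension of V ∘ G along F. That is, there is a bijection, natural in T and V, between natural transformations S¹T ⟶ V and natural transformations T ⟶ S₁V. -/
open CategoryTheory

universe v₃ u₃ u

/-- The right satellite functor `S¹ : (X ⥤ A) ⥤ (Y ⥤ A)`, `T ↦ Lan_G (T ∘ F)`,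
is left adjoint to the left satellite functor `S₁ : (Y ⥤ A) ⥤ (X ⥤ A)`,
`V ↦ Ran_F (V ∘ G)`. -/
theorem satellite_adjunction {X Y S : Type u} [SmallCategory X] [SmallCategory Y]
    [SmallCategory S] {A : Type u₃} [Category.{v₃} A]
    (F : S ⥤ X) (G : S ⥤ Y)
    [∀ H : S ⥤ A, G.HasLeftKanExtension H]
    [∀ H : S ⥤ A, F.HasRightKanExtension H] :
    Nonempty
      (((Functor.whiskeringLeft S X A).obj F ⋙ G.lan) ⊣
        ((Functor.whiskeringLeft S Y A).obj G ⋙ F.ran)) := by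
  exact ⟨(F.ranAdjunction A).comp (G.lanAdjunction A)⟩
end

section
/- Let (T, δ, V) be a right universal S-connected pair (so for every V' : Y → A and natural transformation δ' : T∘F ⟶ V'∘G there is a unique φ : V ⟶ V' with (φ ∘ G) ∘ δ = δ'). If K : A → B is a functor admitting a right adjoint, then the pair (K∘T, K∘δ, K∘V) is also right universal, where K∘δ : K∘T∘F ⟶ K∘V∘G is the whiskered transformation. -/
open CategoryTheory

universe v₁ v₂ v₃ v₄ u₁ u₂ u₃ u₄ u

/-- A right universal `S`-connected pair `(T, δ, V)`. -/
def RightUniversal {X : Type u₁} [Category.{v₁} X] {Y : Type u₂} [Category.{v₂} Y]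
    {A : Type u₃} [Category.{v₃} A] {S : Type u} [SmallCategory S]
    (F : S ⥤ X) (G : S ⥤ Y) (T : X ⥤ A) (V : Y ⥤ A) (δ : F ⋙ T ⟶ G ⋙ V) : Prop :=
  ∀ (V' : Y ⥤ A) (δ' : F ⋙ T ⟶ G ⋙ V'),
    ∃! φ : V ⟶ V', δ ≫ Functor.whiskerLeft G φ = δ'

/-- A functor `K` admitting a right adjoint preserves right universal connected pairs. -/
theorem rightUniversal_whisker_of_isLeftAdjoint {X : Type u₁} [Category.{v₁} X]
    {Y : Type u₂} [Category.{v₂} Y] {A : Type u₃} [Category.{v₃} A]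
    {B : Type u₄} [Category.{v₄} B] {S : Type u} [SmallCategory S]
    (F : S ⥤ X) (G : S ⥤ Y) (T : X ⥤ A) (V : Y ⥤ A) (δ : F ⋙ T ⟶ G ⋙ V)
    (h : RightUniversal F G T V δ) (K : A ⥤ B) [K.IsLeftAdjoint] :
    RightUniversal F G (T ⋙ K) (V ⋙ K) (Functor.whiskerRight δ K) := by
  intro V' δ'
  let R := K.rightAdjoint
  let adj : K ⊣ R := Adjunction.ofIsLeftAdjoint K
  -- transpose of δ'
  let δ'' : F ⋙ T ⟶ G ⋙ (V' ⋙ R) :=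
    { app := fun s => adj.homEquiv _ _ (δ'.app s)
      naturality := by
        intro s s' f
        have := δ'.naturality f
        simp only [Functor.comp_obj, Functor.comp_map] at this ⊢
        rw [← adj.homEquiv_naturality_left, this, adj.homEquiv_naturality_right] }
  obtain ⟨φ₀, hφ₀, huniq⟩ := h (V' ⋙ R) δ''
  refine ⟨{ app := fun y => (adj.homEquiv _ _).symm (φ₀.app y)
            naturality := by
              intro y y' f
              have := φ₀.naturality f
              simp only [Functor.comp_obj, Functor.comp_map] at this ⊢
              rw [← adj.homEquiv_naturality_left_symm, this,
                adj.homEquiv_naturality_right_symm] }, ?_, ?_⟩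
  · ext s
    have h1 := congrArg (fun (α : F ⋙ T ⟶ G ⋙ (V' ⋙ R)) => α.app s) hφ₀
    simp only [NatTrans.comp_app, Functor.whiskerLeft_app, Functor.comp_obj] at h1 ⊢
    have := congrArg (adj.homEquiv _ _).symm h1
    change _ = (adj.homEquiv _ _).symm (adj.homEquiv _ _ (δ'.app s)) at this
    rw [Equiv.symm_apply_apply] at this
    show K.map (δ.app s) ≫ _ = _
    rw [← this, adj.homEquiv_naturality_left_symm]
  · intro ψ hψ
    let ψ₀ : V ⟶ V' ⋙ R :=
      { app := fun y => adj.homEquiv _ _ (ψ.app y)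
        naturality := by
          intro y y' f
          have := ψ.naturality f
          simp only [Functor.comp_obj, Functor.comp_map] at this ⊢
          rw [← adj.homEquiv_naturality_left, this, adj.homEquiv_naturality_right] }
    have hψ₀ : δ ≫ Functor.whiskerLeft G ψ₀ = δ'' := by
      ext s
      have h1 := congrArg (fun (α : F ⋙ (T ⋙ K) ⟶ G ⋙ V') => α.app s) hψ
      simp only [NatTrans.comp_app, Functor.whiskerLeft_app, Functor.whiskerRight_app,
        Functor.comp_obj] at h1 ⊢
      show δ.app s ≫ adj.homEquiv _ _ (ψ.app (G.obj s)) = adj.homEquiv _ _ (δ'.app s)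
      rw [← h1, adj.homEquiv_naturality_left]
      rfl
    have : ψ₀ = φ₀ := huniq ψ₀ hψ₀
    ext y
    have h2 := congrArg (fun (α : V ⟶ V' ⋙ R) => α.app y) this
    show ψ.app y = (adj.homEquiv _ _).symm (φ₀.app y)
    rw [← h2]
    exact (Equiv.symm_apply_apply _ _).symm
end

section
/- Let (T, δ, V) be a left universal S-connected pair (i.e. for every T' : X → A and natural transformation δ' : T'∘F ⟶ V∘G there is a unique ψ : T' ⟶ T with δ ∘ (ψ ∘ F) = δ'). If K : A → B is a functor admitting a left adjoint, then (K∘T, K∘δ, K∘V) is also left universal. -/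
open CategoryTheory

universe v₁ v₂ v₃ v₄ u₁ u₂ u₃ u₄ u

/-- A left universal `S`-connected pair `(T, δ, V)`: every connecting morphism
`δ' : T'∘F ⟶ V∘G` factors uniquely through `δ` via a natural transformation
`T' ⟶ T` whiskered with `F`. -/
def LeftUniversal {X : Type u₁} [Category.{v₁} X] {Y : Type u₂} [Category.{v₂} Y]
    {A : Type u₃} [Category.{v₃} A] {S : Type u} [SmallCategory S]
    (F : S ⥤ X) (G : S ⥤ Y) (T : X ⥤ A) (V : Y ⥤ A) (δ : F ⋙ T ⟶ G ⋙ V) : Prop :=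
  ∀ (T' : X ⥤ A) (δ' : F ⋙ T' ⟶ G ⋙ V),
    ∃! ψ : T' ⟶ T, Functor.whiskerLeft F ψ ≫ δ = δ'

/-- A functor `K` admitting a left adjoint preserves left universal connected pairs. -/
theorem leftUniversal_whisker_of_isRightAdjoint {X : Type u₁} [Category.{v₁} X]
    {Y : Type u₂} [Category.{v₂} Y] {A : Type u₃} [Category.{v₃} A]
    {B : Type u₄} [Category.{v₄} B] {S : Type u} [SmallCategory S]
    (F : S ⥤ X) (G : S ⥤ Y) (T : X ⥤ A) (V : Y ⥤ A) (δ : F ⋙ T ⟶ G ⋙ V)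
    (h : LeftUniversal F G T V δ) (K : A ⥤ B) [K.IsRightAdjoint] :
    LeftUniversal F G (T ⋙ K) (V ⋙ K) (Functor.whiskerRight δ K) := by
  intro T' δ'
  set L := K.leftAdjoint with hL
  let adj : L ⊣ K := Adjunction.ofIsRightAdjoint K
  -- transpose δ' along the adjunction
  let δ'' : F ⋙ (T' ⋙ L) ⟶ G ⋙ V :=
    { app := fun s => (adj.homEquiv _ _).symm (δ'.app s)
      naturality := fun s s' f => by
        have := δ'.naturality f
        try dsimp at this ⊢
        rw [← adj.homEquiv_naturality_left_symm, ← adj.homEquiv_naturality_right_symm]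
        rw [this] }
  obtain ⟨φ, hφ, huniq⟩ := h (T' ⋙ L) δ''
  refine ⟨{ app := fun x => adj.homEquiv _ _ (φ.app x)
            naturality := fun x x' f => by
              have := φ.naturality f
              try dsimp at this ⊢
              rw [← adj.homEquiv_naturality_left, ← adj.homEquiv_naturality_right]
              rw [this] }, ?_, ?_⟩
  · ext s
    have hs := congrArg (fun η => NatTrans.app η s) hφ
    try dsimp at hs ⊢
    rw [← adj.homEquiv_naturality_right]
    have : φ.app (F.obj s) ≫ δ.app s = (adj.homEquiv _ _).symm (δ'.app s) := hs
    rw [this]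
    exact (adj.homEquiv _ _).apply_symm_apply _
  · intro ψ hψ
    let φψ : T' ⋙ L ⟶ T :=
      { app := fun x => (adj.homEquiv _ _).symm (ψ.app x)
        naturality := fun x x' f => by
          have := ψ.naturality f
          try dsimp at this ⊢
          rw [← adj.homEquiv_naturality_left_symm, ← adj.homEquiv_naturality_right_symm]
          rw [this] }
    have hφψ : φψ = φ := by
      refine huniq φψ ?_
      ext s
      have hs := congrArg (fun η => NatTrans.app η s) hψ
      try dsimp [φψ, δ''] at hs ⊢
      rw [← adj.homEquiv_naturality_right_symm]
      rw [hs]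
    ext x
    have := congrArg (fun η => NatTrans.app η x) hφψ
    try dsimp [φψ] at this ⊢
    rw [← this]
    exact ((adj.homEquiv _ _).apply_symm_apply _).symm
end
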